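/- Let g : ℝⁿ → ℝ be convex and L-Lipschitz with ∫ exp(−g(x)) dx = 1, let λ > 0, let g^λ be the Moreau–Yosida envelope of g, let Z_λ = ∫ exp(−g^λ(z)) dz, and set π(x) = exp(−g(x)) and π^λ(x) = exp(−g^λ(x))/Z_λ. Then for any f : ℝⁿ → ℝ that is integrable with respect to both π(x)dx and π^λ(x)dx, one has |∫ f π^λ dx − ∫ f π dx| ≤ (exp(L²λ) − 1) ∫ |f| π^λ dx. -/

import Mathlib

open MeasureTheory

/-- The Moreau–Yosida envelope of `g` with parameter `lam`. -/
noncomputable def mye {n : ℕ} (g : EuclideanSpace ℝ (Fin n) → ℝ) (lam : ℝ)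
    (x : EuclideanSpace ℝ (Fin n)) : ℝ :=
  ⨅ z : EuclideanSpace ℝ (Fin n), (g z + ‖x - z‖ ^ 2 / (2 * lam))

theorem stmt_3 {n : ℕ} (g : EuclideanSpace ℝ (Fin n) → ℝ) (L lam : ℝ)
    (hconv : ConvexOn ℝ Set.univ g)
    (hLip : ∀ x y, |g x - g y| ≤ L * ‖x - y‖)
    (hlam : 0 < lam)
    (hnorm : ∫ x : EuclideanSpace ℝ (Fin n), Real.exp (-g x) = 1)
    (f : EuclideanSpace ℝ (Fin n) → ℝ)
    (hf : Integrable (fun x => f x * Real.exp (-g x)))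
    (hflam : Integrable (fun x =>
      f x * (Real.exp (-(mye g lam x)) /
        ∫ z : EuclideanSpace ℝ (Fin n), Real.exp (-(mye g lam z))))) :
    |(∫ x, f x * (Real.exp (-(mye g lam x)) /
          ∫ z : EuclideanSpace ℝ (Fin n), Real.exp (-(mye g lam z)))) -
        ∫ x, f x * Real.exp (-g x)| ≤
      (Real.exp (L ^ 2 * lam) - 1) *
        ∫ x, |f x| * (Real.exp (-(mye g lam x)) /
          ∫ z : EuclideanSpace ℝ (Fin n), Real.exp (-(mye g lam z))) := by
  have hL' : ∀ x y, |g x - g y| ≤ |L| * ‖x - y‖ := fun x y =>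
    (hLip x y).trans (mul_le_mul_of_nonneg_right (le_abs_self L) (norm_nonneg _))
  set c : ℝ := |L| ^ 2 * lam / 2 with hc
  have hc0 : 0 ≤ c := by positivity
  have hquad : ∀ r : ℝ, 0 ≤ r → |L| * r ≤ c + r ^ 2 / (2 * lam) := by
    intro r hr
    rw [hc, ← sub_nonneg]
    have h : |L| ^ 2 * lam / 2 + r ^ 2 / (2 * lam) - |L| * r
        = (|L| * lam - r) ^ 2 / (2 * lam) := by
      field_simp
      ring
    rw [h]
    positivity
  have key_lb : ∀ x z : EuclideanSpace ℝ (Fin n),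
      g x - c ≤ g z + ‖x - z‖ ^ 2 / (2 * lam) := by
    intro x z
    have h1 : g x - g z ≤ |L| * ‖x - z‖ := (le_abs_self _).trans (hL' x z)
    have h2 := hquad ‖x - z‖ (norm_nonneg _)
    linarith
  have hbdd : ∀ x : EuclideanSpace ℝ (Fin n),
      BddBelow (Set.range fun z => g z + ‖x - z‖ ^ 2 / (2 * lam)) :=
    fun x => ⟨g x - c, by rintro _ ⟨z, rfl⟩; exact key_lb x z⟩
  have hmye_le : ∀ x, mye g lam x ≤ g x := by
    intro x
    have := ciInf_le (hbdd x) x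
    simpa [mye] using this
  have hmye_ge : ∀ x, g x - c ≤ mye g lam x := fun x => le_ciInf (key_lb x)
  have hmye_lip : ∀ x y, mye g lam x ≤ mye g lam y + |L| * ‖x - y‖ := by
    intro x y
    have h : mye g lam x - |L| * ‖x - y‖ ≤ mye g lam y := by
      apply le_ciInf
      intro z
      have h1 : mye g lam x ≤ g (z + (x - y)) + ‖x - (z + (x - y))‖ ^ 2 / (2 * lam) :=
        ciInf_le (hbdd x) _
      have h2 : g (z + (x - y)) - g z ≤ |L| * ‖x - y‖ := by
        have := (le_abs_self _).trans (hL' (z + (x - y)) z)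
        simpa using this
      have h3 : x - (z + (x - y)) = y - z := by abel
      rw [h3] at h1
      linarith
    linarith
  have hmye_cont : Continuous (mye g lam) := by
    have hl : LipschitzWith (Real.toNNReal |L|) (mye g lam) := by
      apply LipschitzWith.of_dist_le_mul
      intro x y
      rw [Real.coe_toNNReal _ (abs_nonneg L), Real.dist_eq, dist_eq_norm]
      rw [abs_sub_le_iff]
      constructor
      · have := hmye_lip x y; linarith
      · have := hmye_lip y x; rw [norm_sub_rev] at this; linarith
    exact hl.continuous
  have hIg : Integrable fun x : EuclideanSpace ℝ (Fin n) => Real.exp (-g x) := by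
    by_contra h
    rw [integral_undef h] at hnorm
    norm_num at hnorm
  have hpt1 : ∀ x, Real.exp (-g x) ≤ Real.exp (-(mye g lam x)) :=
    fun x => Real.exp_le_exp.2 (by linarith [hmye_le x])
  have hpt2 : ∀ x, Real.exp (-(mye g lam x)) ≤ Real.exp c * Real.exp (-g x) := by
    intro x
    rw [← Real.exp_add]
    exact Real.exp_le_exp.2 (by linarith [hmye_ge x])
  have hImye : Integrable fun x : EuclideanSpace ℝ (Fin n) =>
      Real.exp (-(mye g lam x)) := by
    apply Integrable.mono' (hIg.const_mul (Real.exp c))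
    · exact (Real.continuous_exp.comp hmye_cont.neg).aestronglyMeasurable
    · filter_upwards with x
      rw [Real.norm_eq_abs, abs_of_pos (Real.exp_pos _)]
      exact hpt2 x
  set Z := ∫ z : EuclideanSpace ℝ (Fin n), Real.exp (-(mye g lam z)) with hZdef
  have hZ1 : (1 : ℝ) ≤ Z := by
    rw [← hnorm]
    exact integral_mono hIg hImye hpt1
  have hZpos : (0 : ℝ) < Z := lt_of_lt_of_le one_pos hZ1
  have hZc : Z ≤ Real.exp c := by
    calc Z ≤ ∫ x : EuclideanSpace ℝ (Fin n), Real.exp c * Real.exp (-g x) :=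
          integral_mono hImye (hIg.const_mul _) hpt2
      _ = Real.exp c := by rw [integral_const_mul, hnorm, mul_one]
  have hexpc1 : (1 : ℝ) ≤ Real.exp c := Real.one_le_exp hc0
  have hmain : ∀ x, |f x * (Real.exp (-(mye g lam x)) / Z) - f x * Real.exp (-g x)|
      ≤ (Real.exp (L ^ 2 * lam) - 1) * (|f x| * (Real.exp (-(mye g lam x)) / Z)) := by
    intro x
    set a := Real.exp (-(mye g lam x)) / Z with ha
    set b := Real.exp (-g x) with hb
    have ha0 : 0 ≤ a := div_nonneg (Real.exp_pos _).le hZpos.le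
    have hb0 : 0 < b := Real.exp_pos _
    have hZa : Real.exp (-(mye g lam x)) = Z * a := by
      rw [ha]; field_simp
    have hb1 : b ≤ Real.exp c * a := by
      have h1 : b ≤ Z * a := by rw [← hZa]; exact hpt1 x
      have h2 : Z * a ≤ Real.exp c * a := mul_le_mul_of_nonneg_right hZc ha0
      linarith
    have hb2 : a ≤ Real.exp c * b := by
      have h1 : a ≤ Real.exp (-(mye g lam x)) :=
        div_le_self (Real.exp_pos _).le hZ1
      exact h1.trans (hpt2 x)
    have h2c : Real.exp (L ^ 2 * lam) = Real.exp c * Real.exp c := by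
      rw [← Real.exp_add, hc, ← sq_abs L]
      ring_nf
    rw [← mul_sub, abs_mul, h2c]
    set t := Real.exp c with htdef
    have ht1 : (1 : ℝ) ≤ t := hexpc1
    have htq : (0 : ℝ) ≤ t ^ 2 + t - 1 := by nlinarith [ht1]
    have h5 : 0 ≤ a * (t - 1) * (t ^ 2 + t - 1) :=
      mul_nonneg (mul_nonneg ha0 (by linarith)) htq
    have h6 : 0 ≤ a * (t ^ 2 - t) :=
      mul_nonneg ha0 (by nlinarith [ht1])
    have key : |a - b| ≤ (t * t - 1) * a := by
      rw [abs_sub_le_iff]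
      constructor
      · nlinarith [hb2, h5, ht1, ha0, hb0.le]
      · nlinarith [hb1, h6, ht1, ha0, hb0.le]
    calc |f x| * |a - b| ≤ |f x| * ((t * t - 1) * a) :=
          mul_le_mul_of_nonneg_left key (abs_nonneg _)
      _ = (t * t - 1) * (|f x| * a) := by ring
  have habs_eq : (fun x => |f x| * (Real.exp (-(mye g lam x)) / Z))
      = fun x => |f x * (Real.exp (-(mye g lam x)) / Z)| := by
    funext x
    rw [abs_mul, abs_of_nonneg (div_nonneg (Real.exp_pos _).le hZpos.le)]
  have habs_int : Integrable fun x => |f x| * (Real.exp (-(mye g lam x)) / Z) := by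
    rw [habs_eq]
    exact hflam.abs
  calc |(∫ x, f x * (Real.exp (-(mye g lam x)) / Z)) - ∫ x, f x * Real.exp (-g x)|
      = |∫ x, (f x * (Real.exp (-(mye g lam x)) / Z) - f x * Real.exp (-g x))| := by
        rw [integral_sub hflam hf]
    _ ≤ ∫ x, |f x * (Real.exp (-(mye g lam x)) / Z) - f x * Real.exp (-g x)| :=
        by
          simpa [Real.norm_eq_abs] using
            norm_integral_le_integral_norm
              (fun x => f x * (Real.exp (-(mye g lam x)) / Z) - f x * Real.exp (-g x))
    _ ≤ ∫ x, (Real.exp (L ^ 2 * lam) - 1) *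
          (|f x| * (Real.exp (-(mye g lam x)) / Z)) :=
        integral_mono (hflam.sub hf).abs (habs_int.const_mul _) hmain
    _ = (Real.exp (L ^ 2 * lam) - 1) *
          ∫ x, |f x| * (Real.exp (-(mye g lam x)) / Z) := integral_const_mul _ _
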